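/- Let R = (<₁, <₂, <₃) be a standard representation of a finite set V with |V| ≥ 4, with <ᵢ-maximum elements a₁, a₂, a₃. Then the subgraph of Σ₂(R) induced on the set of neighbors of a₁ contains a Hamiltonian cycle, namely the cycle that visits the neighbors of a₁ in increasing <₂-order (each pair of <₂-consecutive neighbors is adjacent, and the <₂-smallest neighbor a₃ is adjacent to the <₂-largest neighbor a₂). -/

import Mathlib

open SimpleGraph

variable {V : Type*}

/-- The graph Σ₂(R) for a triple of linear orders R = (l₁, l₂, l₃) on V:
`x` and `y` are adjacent iff every other vertex `z` lies above both `x` and `y`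
in one of the three orders. -/
def Sigma2 (l₁ l₂ l₃ : LinearOrder V) : SimpleGraph V where
  Adj x y := x ≠ y ∧ ∀ z, z ≠ x → z ≠ y →
    (l₁.lt x z ∧ l₁.lt y z) ∨ (l₂.lt x z ∧ l₂.lt y z) ∨ (l₃.lt x z ∧ l₃.lt y z)
  symm := ⟨by
    rintro x y ⟨hxy, h⟩
    exact ⟨hxy.symm, fun z hzy hzx => by rcases h z hzx hzy with h|h|h <;> tauto⟩⟩
  loopless := ⟨fun x h => h.1 rfl⟩

/-- The three orders have empty intersection: for distinct x, y, some order has x below y. -/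
def IsRep (l₁ l₂ l₃ : LinearOrder V) : Prop :=
  ∀ x y : V, x ≠ y → l₁.lt x y ∨ l₂.lt x y ∨ l₃.lt x y

/-- `a` is the maximum element of the linear order `l`. -/
def IsMaxOf (l : LinearOrder V) (a : V) : Prop := ∀ x, x ≠ a → l.lt x a

/-- `a` is among the two smallest elements of `l`: at most one element lies below `a`. -/
def AmongTwoSmallest (l : LinearOrder V) (a : V) : Prop :=
  ∀ x y, l.lt x a → l.lt y a → x = y

/-- `R = (l₁, l₂, l₃)` is a standard representation with `<ᵢ`-maxima `a₁, a₂, a₃`. -/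
structure IsStdRep (l₁ l₂ l₃ : LinearOrder V) (a₁ a₂ a₃ : V) : Prop where
  rep : IsRep l₁ l₂ l₃
  top₁ : IsMaxOf l₁ a₁
  top₂ : IsMaxOf l₂ a₂
  top₃ : IsMaxOf l₃ a₃
  a₁_small₂ : AmongTwoSmallest l₂ a₁
  a₁_small₃ : AmongTwoSmallest l₃ a₁
  a₂_small₁ : AmongTwoSmallest l₁ a₂
  a₂_small₃ : AmongTwoSmallest l₃ a₂
  a₃_small₁ : AmongTwoSmallest l₁ a₃
  a₃_small₂ : AmongTwoSmallest l₂ a₃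

/-- The restriction of a linear order on `V` to `V \ {b}`. -/
def restrictOrder (l : LinearOrder V) (b : V) : LinearOrder {x : V // x ≠ b} :=
  @LinearOrder.lift' _ _ l Subtype.val Subtype.val_injective

section Machinery
open List
variable {α : Type*}

lemma walk_of_chain (G : SimpleGraph α) :
    ∀ (l : List α) (a : α), List.Chain G.Adj a l →
    ∃ w : G.Walk a (l.getLastD a), w.support = a :: l := by
  intro l
  induction l with
  | nil => intro a _; exact ⟨Walk.nil, rfl⟩
  | cons b t ih =>
    intro a h
    simp only [List.Chain, List.isChain_cons_cons] at h
    obtain ⟨w, hw⟩ := ih b h.2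
    rw [List.getLastD_cons]
    exact ⟨Walk.cons h.1 w, by simp [hw]⟩

lemma sorted_le_getLastD [LinearOrder α] :
    ∀ (t : List α) (s : α), (s :: t).Pairwise (· ≤ ·) → ∀ u ∈ s :: t, u ≤ t.getLastD s := by
  intro t
  induction t with
  | nil => intro s _ u hu; simp at hu; simp [hu]
  | cons b t ih =>
    intro s hs u hu
    rw [List.getLastD_cons]
    rw [List.pairwise_cons] at hs
    rcases List.mem_cons.mp hu with rfl | hu
    · exact le_trans (hs.1 b (List.mem_cons_self)) (ih b hs.2 b (List.mem_cons_self))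
    · exact ih b hs.2 u hu

lemma getLastD_mem' : ∀ (t : List α) (s : α), t ≠ [] → t.getLastD s ∈ t := by
  intro t
  induction t with
  | nil => intro s h; exact absurd rfl h
  | cons b t ih =>
    intro s _
    rw [List.getLastD_cons]
    rcases eq_or_ne t [] with rfl | h
    · simp
    · exact List.mem_cons_of_mem _ (ih b h)

lemma ham_key [LinearOrder α] (G : SimpleGraph α) (m s : α) (t : List α) (ht : t ≠ [])
    (hs : (m :: s :: t).Pairwise (· < ·))
    (hall : ∀ u, u ∈ m :: s :: t)
    (hchain : (m :: s :: t).Chain' G.Adj)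
    (hminmax : ∀ x y : α, (∀ u, x ≤ u) → (∀ u, u ≤ y) → G.Adj y x) :
    ∃ (v : α) (c : G.Walk v v), c.IsHamiltonianCycle := by
  have hnd : (m :: s :: t).Nodup := hs.nodup
  simp only [List.Chain', List.isChain_cons_cons] at hchain
  obtain ⟨hms, hchain'⟩ := hchain
  have hchain2 : List.Chain G.Adj s t := hchain'
  obtain ⟨q, hq⟩ := walk_of_chain G t s hchain2
  have hyt : t.getLastD s ∈ t := getLastD_mem' t s ht
  have hsle : (m :: s :: t).Pairwise (· ≤ ·) := hs.imp (fun h => le_of_lt h)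
  have hley : ∀ u, u ≤ t.getLastD s := by
    intro u
    have h2 : (s :: t).Pairwise (· ≤ ·) := (List.pairwise_cons.mp hsle).2
    rcases List.mem_cons.mp (hall u) with rfl | hu
    · exact le_trans ((List.pairwise_cons.mp hsle).1 s (List.mem_cons_self))
        (sorted_le_getLastD t s h2 s (List.mem_cons_self))
    · exact sorted_le_getLastD t s h2 u hu
  have hmle : ∀ u, m ≤ u := by
    intro u
    rcases List.mem_cons.mp (hall u) with rfl | hu
    · exact le_rfl
    · exact le_of_lt ((List.pairwise_cons.mp hs).1 u hu)
  have hym : G.Adj (t.getLastD s) m := hminmax m _ hmle hley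
  refine ⟨t.getLastD s, Walk.cons hym (Walk.cons hms q), ?_⟩
  have hsupp : (Walk.cons hms q).support = m :: s :: t := by simp [hq]
  have hpath : (Walk.cons hms q).IsPath := Walk.IsPath.mk' (by rw [hsupp]; exact hnd)
  have hedge : s(t.getLastD s, m) ∉ (Walk.cons hms q).edges := by
    intro hmem
    rw [Walk.edges_cons] at hmem
    rcases List.mem_cons.mp hmem with heq | hmem'
    · rw [Sym2.eq_iff] at heq
      rcases heq with ⟨h1, h2⟩ | ⟨h1, h2⟩
      · rw [← h1] at hnd
        exact (List.nodup_cons.mp hnd).1 (List.mem_cons_of_mem _ hyt)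
      · rw [← h1] at hnd
        exact (List.nodup_cons.mp (List.nodup_cons.mp hnd).2).1 hyt
    · have : m ∈ q.support := Walk.snd_mem_support_of_mem_edges q hmem'
      rw [hq] at this
      exact (List.nodup_cons.mp hnd).1 this
  rw [SimpleGraph.Walk.isHamiltonianCycle_iff_isCycle_and_support_count_tail_eq_one]
  constructor
  · exact (Walk.cons_isCycle_iff _ hym).mpr ⟨hpath, hedge⟩
  · intro a
    have hts : (Walk.cons hym (Walk.cons hms q)).support.tail = m :: s :: t := by
      rw [Walk.support_cons]; simpa using hsupp
    rw [hts]
    exact List.count_eq_one_of_mem hnd (hall a)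

lemma ham_of_consecutive_inst [LinearOrder α] [Fintype α] (G : SimpleGraph α)
    (hcard : 3 ≤ Fintype.card α)
    (hadj : ∀ x y : α, x < y → (∀ u, ¬(x < u ∧ u < y)) → G.Adj x y)
    (hminmax : ∀ x y : α, (∀ u, x ≤ u) → (∀ u, u ≤ y) → G.Adj y x) :
    ∃ (v : α) (c : G.Walk v v), c.IsHamiltonianCycle := by
  obtain ⟨L, hLs, hall, hlen⟩ :
      ∃ L : List α, L.Pairwise (· < ·) ∧ (∀ x, x ∈ L) ∧ 3 ≤ L.length :=
    ⟨Finset.univ.sort (· ≤ ·), (Finset.sortedLT_sort _).pairwise,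
      fun x => (Finset.mem_sort _).mpr (Finset.mem_univ x),
      by rw [Finset.length_sort]; simpa using hcard⟩
  have hchain : L.Chain' G.Adj := by
    simp only [List.Chain', List.isChain_iff_getElem]
    intro i hi
    apply hadj
    · exact hLs.rel_get_of_lt (by simp [Fin.mk_lt_mk])
    · rintro u ⟨h1, h2⟩
      obtain ⟨j, hj⟩ := List.mem_iff_get.mp (hall u)
      have hij : i < j.val := by
        rcases lt_trichotomy (j.val) i with h | h | h
        · exact absurd (hLs.rel_get_of_lt (show j < ⟨i, by omega⟩ from h)) (by rw [hj]; exact fun hh => asymm h1 hh)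
        · exact absurd h1 (by rw [← hj, (show j = ⟨i, by omega⟩ from Fin.ext h)]; exact lt_irrefl _)
        · exact h
      have hji : j.val < i + 1 := by
        rcases lt_trichotomy (j.val) (i+1) with h | h | h
        · exact h
        · exact absurd h2 (by rw [← hj, (show j = ⟨i+1, by omega⟩ from Fin.ext h)]; exact lt_irrefl _)
        · exact absurd (hLs.rel_get_of_lt (show (⟨i+1, by omega⟩ : Fin L.length) < j from h)) (by rw [hj]; exact fun hh => asymm h2 hh)
      omega
  rcases L with _ | ⟨m, _ | ⟨s, t⟩⟩
  · simp at hlen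
  · simp at hlen
  · have ht : t ≠ [] := by
      intro h; subst h; simp at hlen
    exact ham_key G m s t ht hLs hall hchain hminmax

lemma ham_of_consecutive (lo : LinearOrder α) [Fintype α] (G : SimpleGraph α)
    (hcard : 3 ≤ Fintype.card α)
    (hadj : ∀ x y : α, lo.lt x y → (∀ u, ¬(lo.lt x u ∧ lo.lt u y)) → G.Adj x y)
    (hminmax : ∀ x y : α, (∀ u, lo.le x u) → (∀ u, lo.le u y) → G.Adj y x) :
    ∃ (v : α) (c : G.Walk v v), c.IsHamiltonianCycle := by
  letI := lo
  exact ham_of_consecutive_inst G hcard hadj hminmax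

end Machinery

-- order helpers
lemma lo_tri (l : LinearOrder V) {x y : V} (h : x ≠ y) : l.lt x y ∨ l.lt y x := by
  letI := l; exact lt_or_gt_of_ne h

lemma lo_trans (l : LinearOrder V) {x y z : V} (h1 : l.lt x y) (h2 : l.lt y z) : l.lt x z := by
  letI := l; exact lt_trans h1 h2

lemma lo_asymm (l : LinearOrder V) {x y : V} (h : l.lt x y) : ¬ l.lt y x := by
  letI := l; exact asymm h

lemma lo_ne (l : LinearOrder V) {x y : V} (h : l.lt x y) : x ≠ y := by
  letI := l; exact ne_of_lt h

lemma lo_irrefl (l : LinearOrder V) {x : V} (h : l.lt x x) : False := by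
  letI := l; exact lt_irrefl x h

/-- two elements that are both among the two smallest: everything else is above both -/
lemma two_smallest (l : LinearOrder V) {p q : V} (hpq : p ≠ q)
    (hp : AmongTwoSmallest l p) (hq : AmongTwoSmallest l q) :
    ∀ z, z ≠ p → z ≠ q → l.lt p z ∧ l.lt q z := by
  intro z hzp hzq
  constructor
  · rcases lo_tri l hzp with h | h
    · exfalso
      rcases lo_tri l hpq with h2 | h2
      · exact hzp (hq z p (lo_trans l h h2) h2)
      · exact hzq (hp z q h h2)
    · exact h
  · rcases lo_tri l hzq with h | h
    · exfalso
      rcases lo_tri l hpq with h2 | h2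
      · exact hzp (hq z p h h2)
      · exact hzq (hp z q (lo_trans l h h2) h2)
    · exact h

lemma lo_le_not_lt (l : LinearOrder V) {x y : V} (h : l.le x y) : ¬ l.lt y x := by
  letI := l; exact not_lt_of_ge h

lemma lo_lt_of_le_ne (l : LinearOrder V) {x y : V} (h : l.le x y) (h2 : x ≠ y) : l.lt x y := by
  letI := l; exact lt_of_le_of_ne h h2

lemma lo_le_of_lt (l : LinearOrder V) {x y : V} (h : l.lt x y) : l.le x y := by
  letI := l; exact le_of_lt h

lemma lo_le_of_eq (l : LinearOrder V) {x y : V} (h : x = y) : l.le x y := by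
  letI := l; exact le_of_eq h

lemma lo_le_antisymm (l : LinearOrder V) {x y : V} (h : l.le x y) (h2 : l.le y x) : x = y := by
  letI := l; exact le_antisymm h h2

section Std

variable {l₁ l₂ l₃ : LinearOrder V} {a₁ a₂ a₃ : V}

lemma max_not_small [Fintype V] (hV : 3 ≤ Fintype.card V) (l : LinearOrder V) (a : V)
    (h1 : IsMaxOf l a) (h2 : AmongTwoSmallest l a) : False := by
  have hcard : 1 < (Finset.univ.erase a).card := by
    rw [Finset.card_erase_of_mem (Finset.mem_univ a), Finset.card_univ]; omega
  obtain ⟨x, hx, y, hy, hxy⟩ := Finset.one_lt_card.mp hcard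
  exact hxy (h2 x y (h1 x (Finset.mem_erase.mp hx).1) (h1 y (Finset.mem_erase.mp hy).1))

lemma std_ne12 [Fintype V] (hV : 3 ≤ Fintype.card V) (hR : IsStdRep l₁ l₂ l₃ a₁ a₂ a₃) :
    a₁ ≠ a₂ := fun h => max_not_small hV l₂ a₂ hR.top₂ (h ▸ hR.a₁_small₂)

lemma std_ne13 [Fintype V] (hV : 3 ≤ Fintype.card V) (hR : IsStdRep l₁ l₂ l₃ a₁ a₂ a₃) :
    a₁ ≠ a₃ := fun h => max_not_small hV l₃ a₃ hR.top₃ (h ▸ hR.a₁_small₃)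

lemma std_ne23 [Fintype V] (hV : 3 ≤ Fintype.card V) (hR : IsStdRep l₁ l₂ l₃ a₁ a₂ a₃) :
    a₂ ≠ a₃ := fun h => max_not_small hV l₃ a₃ hR.top₃ (h ▸ hR.a₂_small₃)

lemma nbr_cond (hR : IsStdRep l₁ l₂ l₃ a₁ a₂ a₃) {x z : V}
    (h : (Sigma2 l₁ l₂ l₃).Adj a₁ x) (hz1 : z ≠ a₁) (hz2 : z ≠ x) :
    (l₂.lt a₁ z ∧ l₂.lt x z) ∨ (l₃.lt a₁ z ∧ l₃.lt x z) := by
  rcases h.2 z hz1 hz2 with h' | h' | h'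
  · exact absurd h'.1 (lo_asymm l₁ (hR.top₁ z hz1))
  · exact Or.inl h'
  · exact Or.inr h'

lemma adj_a1_a2 [Fintype V] (hV : 3 ≤ Fintype.card V) (hR : IsStdRep l₁ l₂ l₃ a₁ a₂ a₃) :
    (Sigma2 l₁ l₂ l₃).Adj a₁ a₂ :=
  ⟨std_ne12 hV hR, fun z hz1 hz2 => Or.inr (Or.inr
    (two_smallest l₃ (std_ne12 hV hR) hR.a₁_small₃ hR.a₂_small₃ z hz1 hz2))⟩

lemma adj_a1_a3 [Fintype V] (hV : 3 ≤ Fintype.card V) (hR : IsStdRep l₁ l₂ l₃ a₁ a₂ a₃) :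
    (Sigma2 l₁ l₂ l₃).Adj a₁ a₃ :=
  ⟨std_ne13 hV hR, fun z hz1 hz2 => Or.inr (Or.inl
    (two_smallest l₂ (std_ne13 hV hR) hR.a₁_small₂ hR.a₃_small₂ z hz1 hz2))⟩

lemma adj_a3_a2 [Fintype V] (hV : 3 ≤ Fintype.card V) (hR : IsStdRep l₁ l₂ l₃ a₁ a₂ a₃) :
    (Sigma2 l₁ l₂ l₃).Adj a₃ a₂ :=
  ⟨(std_ne23 hV hR).symm, fun z hz1 hz2 => Or.inl
    ((two_smallest l₁ (std_ne23 hV hR).symm hR.a₃_small₁ hR.a₂_small₁ z hz1 hz2))⟩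

/-- a₃ is the ₂-smallest element outside {a₁}. -/
lemma a3_min [Fintype V] (hV : 3 ≤ Fintype.card V) (hR : IsStdRep l₁ l₂ l₃ a₁ a₂ a₃)
    {x : V} (h1 : x ≠ a₁) (h3 : x ≠ a₃) : l₂.lt a₃ x :=
  (two_smallest l₂ (std_ne13 hV hR) hR.a₁_small₂ hR.a₃_small₂ x h1 h3).2

end Std

section Std2
variable {l₁ l₂ l₃ : LinearOrder V} {a₁ a₂ a₃ : V}

lemma consec [Fintype V] (hV : 3 ≤ Fintype.card V) (hR : IsStdRep l₁ l₂ l₃ a₁ a₂ a₃) :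
    ∀ w w', (Sigma2 l₁ l₂ l₃).Adj a₁ w → (Sigma2 l₁ l₂ l₃).Adj a₁ w' →
      l₂.lt w w' →
      (∀ u, (Sigma2 l₁ l₂ l₃).Adj a₁ u → ¬(l₂.lt w u ∧ l₂.lt u w')) →
      (Sigma2 l₁ l₂ l₃).Adj w w' := by
  classical
  intro w w' hw hw' hlt hcons
  refine ⟨lo_ne l₂ hlt, fun z hzw hzw' => ?_⟩
  by_cases hza : z = a₁
  · subst hza
    exact Or.inl ⟨hR.top₁ w hw.1.symm, hR.top₁ w' hw'.1.symm⟩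
  · rcases nbr_cond hR hw' hza hzw' with ⟨hz2a, hz2⟩ | ⟨hz3a, hz3⟩
    · exact Or.inr (Or.inl ⟨lo_trans l₂ hlt hz2, hz2⟩)
    · rcases nbr_cond hR hw hza hzw with ⟨hw2a, hw2⟩ | ⟨hw3a, hw3⟩
      · rcases lo_tri l₂ hzw' with hzw2 | hw'2
        · rcases lo_tri l₃ hzw with hz3w | hw3z
          · -- bad configuration : derive False
            exfalso
            set T := Finset.univ.filter (fun u => l₂.lt w u ∧ l₂.lt u w' ∧ l₂.lt a₁ u ∧
              l₃.lt w' u ∧ l₃.lt u w ∧ l₃.lt a₁ u) with hT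
            have hzT : z ∈ T := by
              rw [hT, Finset.mem_filter]
              exact ⟨Finset.mem_univ _, hw2, hzw2, hw2a, hz3, hz3w, hz3a⟩
            obtain ⟨z₀, hz₀T, hz₀min⟩ :=
              @Finset.exists_min_image V V l₂ T id ⟨z, hzT⟩
            rw [hT, Finset.mem_filter] at hz₀T
            obtain ⟨-, h1, h2, h3, h4, h5, h6⟩ := hz₀T
            have hz₀a : (Sigma2 l₁ l₂ l₃).Adj a₁ z₀ := by
              refine ⟨lo_ne l₂ h3, fun u hu1 hu2 => ?_⟩
              by_cases huw : u = w
              · subst huw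
                exact Or.inr (Or.inr ⟨lo_trans l₃ h6 h5, h5⟩)
              · by_cases huw' : u = w'
                · subst huw'
                  exact Or.inr (Or.inl ⟨lo_trans l₂ h3 h2, h2⟩)
                · rcases nbr_cond hR hw' hu1 huw' with ⟨ha2, hw'2u⟩ | ⟨ha3, hw'3u⟩
                  · exact Or.inr (Or.inl ⟨ha2, lo_trans l₂ h2 hw'2u⟩)
                  · rcases nbr_cond hR hw hu1 huw with ⟨ha2', hwu2⟩ | ⟨ha3', hwu3⟩
                    · rcases lo_tri l₂ hu2 with hu2' | hz₀u
                      · rcases lo_tri l₃ hu2 with hu3' | hz₀u3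
                        · exfalso
                          have huT : u ∈ T := by
                            rw [hT, Finset.mem_filter]
                            exact ⟨Finset.mem_univ _, hwu2, lo_trans l₂ hu2' h2, ha2',
                              hw'3u, lo_trans l₃ hu3' h5, ha3⟩
                          exact lo_le_not_lt l₂ (hz₀min u huT) hu2'
                        · exact Or.inr (Or.inr ⟨ha3, hz₀u3⟩)
                      · exact Or.inr (Or.inl ⟨ha2', hz₀u⟩)
                    · exact Or.inr (Or.inr ⟨ha3', lo_trans l₃ h5 hwu3⟩)
            exact hcons z₀ hz₀a ⟨h1, h2⟩
          · exact Or.inr (Or.inr ⟨hw3z, hz3⟩)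
        · exact Or.inr (Or.inl ⟨lo_trans l₂ hlt hw'2, hw'2⟩)
      · exact Or.inr (Or.inr ⟨hw3, hz3⟩)

lemma third_nbr [Fintype V] (hV : 4 ≤ Fintype.card V) (hR : IsStdRep l₁ l₂ l₃ a₁ a₂ a₃) :
    ∃ m, (Sigma2 l₁ l₂ l₃).Adj a₁ m ∧ m ≠ a₂ ∧ m ≠ a₃ := by
  classical
  have hV3 : 3 ≤ Fintype.card V := by omega
  set T := Finset.univ \ ({a₁, a₂, a₃} : Finset V) with hT
  have hTcard : 1 ≤ T.card := by
    rw [hT, Finset.card_sdiff_of_subset (Finset.subset_univ _), Finset.card_univ]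
    have h3 : ({a₁, a₂, a₃} : Finset V).card ≤ 3 := by
      exact Finset.card_le_three
    omega
  obtain ⟨m, hmT, hmin⟩ :=
    @Finset.exists_min_image V V l₂ T id (Finset.card_pos.mp (by omega))
  rw [hT, Finset.mem_sdiff] at hmT
  have hm1 : m ≠ a₁ := fun h => hmT.2 (by simp [h])
  have hm2 : m ≠ a₂ := fun h => hmT.2 (by simp [h])
  have hm3 : m ≠ a₃ := fun h => hmT.2 (by simp [h])
  refine ⟨m, ⟨hm1.symm, fun z hz1 hz2 => ?_⟩, hm2, hm3⟩
  by_cases hz3 : z = a₃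
  · subst hz3
    exact Or.inr (Or.inr ⟨hR.top₃ a₁ (std_ne13 hV3 hR), hR.top₃ m hm3⟩)
  · by_cases hz2' : z = a₂
    · subst hz2'
      exact Or.inr (Or.inl ⟨hR.top₂ a₁ (std_ne12 hV3 hR), hR.top₂ m hm2⟩)
    · have hzT : z ∈ T := by
        rw [hT, Finset.mem_sdiff]
        refine ⟨Finset.mem_univ _, ?_⟩
        simp only [Finset.mem_insert, Finset.mem_singleton]
        push_neg
        exact ⟨hz1, hz2', hz3⟩
      have hmz : l₂.lt m z := lo_lt_of_le_ne l₂ (hmin z hzT) (Ne.symm hz2)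
      exact Or.inr (Or.inl
        ⟨(two_smallest l₂ (std_ne13 hV3 hR) hR.a₁_small₂ hR.a₃_small₂ z hz1 hz3).1, hmz⟩)

end Std2


/-- The subgraph of Σ₂(R) induced on the neighbors of a₁ has a
Hamiltonian cycle, namely the one visiting the neighbors in increasing <₂-order:
<₂-consecutive neighbors are adjacent, and the <₂-smallest neighbor a₃ is adjacent to
the <₂-largest neighbor a₂. -/
theorem stmt13 {V : Type*} [Fintype V] (hV : 4 ≤ Fintype.card V)
    (l₁ l₂ l₃ : LinearOrder V) (a₁ a₂ a₃ : V)
    (hR : IsStdRep l₁ l₂ l₃ a₁ a₂ a₃) :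
    (∃ (v : ((Sigma2 l₁ l₂ l₃).neighborSet a₁))
        (c : ((Sigma2 l₁ l₂ l₃).induce ((Sigma2 l₁ l₂ l₃).neighborSet a₁)).Walk v v),
          c.IsHamiltonianCycle) ∧
      (∀ w w', (Sigma2 l₁ l₂ l₃).Adj a₁ w → (Sigma2 l₁ l₂ l₃).Adj a₁ w' →
        l₂.lt w w' →
        (∀ u, (Sigma2 l₁ l₂ l₃).Adj a₁ u → ¬(l₂.lt w u ∧ l₂.lt u w')) →
        (Sigma2 l₁ l₂ l₃).Adj w w') ∧
      (Sigma2 l₁ l₂ l₃).Adj a₃ a₂ := by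
  classical
  have hV3 : 3 ≤ Fintype.card V := by omega
  refine ⟨?_, consec hV3 hR, adj_a3_a2 hV3 hR⟩
  haveI : Fintype ↥((Sigma2 l₁ l₂ l₃).neighborSet a₁) := Fintype.ofFinite _
  letI lS : LinearOrder ↥((Sigma2 l₁ l₂ l₃).neighborSet a₁) :=
    @LinearOrder.lift' _ V l₂ Subtype.val Subtype.val_injective
  obtain ⟨m, hm, hm2, hm3⟩ := third_nbr hV hR
  have ha2S : a₂ ∈ (Sigma2 l₁ l₂ l₃).neighborSet a₁ := adj_a1_a2 hV3 hR
  have ha3S : a₃ ∈ (Sigma2 l₁ l₂ l₃).neighborSet a₁ := adj_a1_a3 hV3 hR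
  have hmS : m ∈ (Sigma2 l₁ l₂ l₃).neighborSet a₁ := hm
  have hcard : 3 ≤ Fintype.card ↥((Sigma2 l₁ l₂ l₃).neighborSet a₁) := by
    have h23 : a₂ ≠ a₃ := std_ne23 hV3 hR
    have hcard : ({⟨a₂, ha2S⟩, ⟨a₃, ha3S⟩, ⟨m, hmS⟩} :
        Finset ↥((Sigma2 l₁ l₂ l₃).neighborSet a₁)).card = 3 := by
      rw [Finset.card_insert_of_notMem, Finset.card_insert_of_notMem,
        Finset.card_singleton]
      · simp only [Finset.mem_singleton, Subtype.ext_iff]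
        exact hm3.symm
      · simp only [Finset.mem_insert, Finset.mem_singleton, Subtype.ext_iff]
        push_neg
        exact ⟨h23, hm2.symm⟩
    rw [← hcard, ← Finset.card_univ]
    exact Finset.card_le_univ _
  have hadj : ∀ x y : ↥((Sigma2 l₁ l₂ l₃).neighborSet a₁), lS.lt x y →
      (∀ u, ¬(lS.lt x u ∧ lS.lt u y)) →
      ((Sigma2 l₁ l₂ l₃).induce ((Sigma2 l₁ l₂ l₃).neighborSet a₁)).Adj x y := by
    intro x y hxy hbet
    exact consec hV3 hR x.val y.val x.2 y.2 hxy
      (fun u hu hb => hbet ⟨u, hu⟩ ⟨hb.1, hb.2⟩)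
  have hmm : ∀ x y : ↥((Sigma2 l₁ l₂ l₃).neighborSet a₁),
      (∀ u, lS.le x u) → (∀ u, lS.le u y) →
      ((Sigma2 l₁ l₂ l₃).induce ((Sigma2 l₁ l₂ l₃).neighborSet a₁)).Adj y x := by
    intro x y hxa hay
    have hx3 : (x : V) = a₃ := by
      apply lo_le_antisymm l₂ (hxa ⟨a₃, ha3S⟩)
      rcases eq_or_ne (x : V) a₃ with h | h
      · exact lo_le_of_eq l₂ h.symm
      · exact lo_le_of_lt l₂ (a3_min hV3 hR (Ne.symm x.2.1) h)
    have hy2 : (y : V) = a₂ := by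
      apply lo_le_antisymm l₂ _ (hay ⟨a₂, ha2S⟩)
      rcases eq_or_ne (y : V) a₂ with h | h
      · exact lo_le_of_eq l₂ h
      · exact lo_le_of_lt l₂ (hR.top₂ _ h)
    have hx3' : x = ⟨a₃, ha3S⟩ := Subtype.ext hx3
    have hy2' : y = ⟨a₂, ha2S⟩ := Subtype.ext hy2
    subst hx3' hy2'
    exact (adj_a3_a2 hV3 hR).symm
  obtain ⟨v, c, hc⟩ := ham_of_consecutive lS
    ((Sigma2 l₁ l₂ l₃).induce ((Sigma2 l₁ l₂ l₃).neighborSet a₁)) hcard hadj hmm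
  exact ⟨v, c, by convert hc⟩
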